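/- arXiv:2512.20325 — 5 statements merged into one kernel-verified Lean document; each statement's English description precedes it below -/
import Mathlib

section
/- Fix an integer i ≥ 2 and natural number c with c ≥ i − 1, let b, D : ℝ, and let d : ℕ → ℝ be antitone. Then the multiset of values max(0, min(D, min_{j∈S} d j) − b), as S ranges over all (i−1)-element subsets of {1, …, c} (counted with multiplicity), equals the multiset in which, for each j with i − 1 ≤ j ≤ c, the value ℓ(j) := max(0, min(D, d j) − b) occurs with multiplicity C(j−1, i−2). Formally, the multiset obtained by mapping S ↦ max(0, min(D, S.inf' d) − b) over ((Finset.Icc 1 c).powersetCard (i−1)).val equals the multiset ⋃_{j ∈ Icc (i−1) c} (Multiset.replicate ((j−1).choose (i−2)) (max(0, min(D, d j) − b))). -/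
lemma icc_succ_right (a c : ℕ) (h : a ≤ c + 1) :
    Finset.Icc a (c + 1) = insert (c + 1) (Finset.Icc a c) := by
  ext x; simp only [Finset.mem_Icc, Finset.mem_insert]; omega

lemma key_count (F : ℕ → ℝ) (m : ℕ) : ∀ c : ℕ,
    ((Finset.Icc 1 c).powersetCard (m + 1)).val.map (fun S => F (S.sup id)) =
    (Finset.Icc (m + 1) c).val.bind
      (fun j => Multiset.replicate ((j - 1).choose m) (F j)) := by
  intro c
  induction c with
  | zero => simp
  | succ c ih =>
    have hnot : (c + 1) ∉ Finset.Icc 1 c := by simp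
    rw [icc_succ_right 1 c (by omega), Finset.powersetCard_succ_insert hnot]
    have hdisj : Disjoint ((Finset.Icc 1 c).powersetCard (m + 1))
        (((Finset.Icc 1 c).powersetCard m).image (insert (c + 1))) := by
      rw [Finset.disjoint_left]
      intro S hS hS'
      obtain ⟨T, hT, rfl⟩ := Finset.mem_image.mp hS'
      have := (Finset.mem_powersetCard.mp hS).1 (Finset.mem_insert_self (c+1) T)
      simp at this
    rw [← Finset.disjUnion_eq_union _ _ hdisj]
    have hval : (((Finset.Icc 1 c).powersetCard (m + 1)).disjUnion
        (((Finset.Icc 1 c).powersetCard m).image (insert (c + 1))) hdisj).val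
        = ((Finset.Icc 1 c).powersetCard (m + 1)).val
          + (((Finset.Icc 1 c).powersetCard m).image (insert (c + 1))).val := rfl
    rw [hval, Multiset.map_add, ih]
    have himgval : (((Finset.Icc 1 c).powersetCard m).image (insert (c + 1))).val
        = ((Finset.Icc 1 c).powersetCard m).val.map (insert (c + 1)) := by
      apply Finset.image_val_of_injOn
      intro S hS T hT hST
      have hSc : (c+1) ∉ S := fun h => hnot ((Finset.mem_powersetCard.mp hS).1 h)
      have hTc : (c+1) ∉ T := fun h => hnot ((Finset.mem_powersetCard.mp hT).1 h)
      rw [← Finset.erase_insert hSc, ← Finset.erase_insert hTc, hST]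
    rw [himgval, Multiset.map_map]
    have hconst : ((Finset.Icc 1 c).powersetCard m).val.map
        ((fun S => F (S.sup id)) ∘ insert (c + 1)) =
        Multiset.replicate (c.choose m) (F (c + 1)) := by
      have hc1 : ∀ S ∈ ((Finset.Icc 1 c).powersetCard m).val,
          ((fun S => F (S.sup id)) ∘ insert (c + 1)) S = F (c + 1) := by
        intro S hS
        have hS' : S ∈ (Finset.Icc 1 c).powersetCard m := hS
        have hsub := (Finset.mem_powersetCard.mp hS').1
        have hle : S.sup id ≤ c := Finset.sup_le fun j hj => by
          have := hsub hj; simp only [Finset.mem_Icc] at this; exact this.2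
        simp only [Function.comp_apply, Finset.sup_insert, id]
        congr 1
        omega
      rw [Multiset.map_congr rfl hc1, Multiset.map_const']
      congr 1
      have : Multiset.card ((Finset.Icc 1 c).powersetCard m).val
          = ((Finset.Icc 1 c).powersetCard m).card := rfl
      rw [this, Finset.card_powersetCard, Nat.card_Icc]
      norm_num
    rw [hconst]
    by_cases hm : m + 1 ≤ c + 1
    · rw [icc_succ_right (m+1) c hm, Finset.insert_val,
        Multiset.ndinsert_of_notMem (by simp), Multiset.cons_bind]
      simp only [Nat.add_sub_cancel]
      rw [add_comm]
    · have h1 : Finset.Icc (m+1) (c+1) = ∅ := Finset.Icc_eq_empty (by omega)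
      have h2 : Finset.Icc (m+1) c = ∅ := Finset.Icc_eq_empty (by omega)
      have h3 : c.choose m = 0 := Nat.choose_eq_zero_of_lt (by omega)
      simp [h1, h2, h3]

lemma inf'_antitone {d : ℕ → ℝ} (hd : Antitone d) (S : Finset ℕ) (hS : S.Nonempty) :
    S.inf' hS d = d (S.sup id) := by
  apply le_antisymm
  · have hmem : S.sup id ∈ S := by
      have := Finset.sup'_eq_sup hS id ▸ Finset.sup'_mem (↑S : Set ℕ)
        (fun a ha b hb => by
          rcases le_total a b with h | h
          · simp [max_eq_right h]; exact hb
          · simp [max_eq_left h]; exact ha) S hS id (fun b hb => hb)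
      simpa [← Finset.sup'_eq_sup hS id] using this
    exact Finset.inf'_le d hmem
  · exact Finset.le_inf' hS d fun j hj => hd (Finset.le_sup (f := id) hj)

/-- Anchored rank-grouped multiset identity: the multiset of truncated lengths
`max 0 (min D (min_{j∈S} d j) - b)` over all `(i-1)`-element subsets `S` of
`{1, …, c}` equals the multiset where, for each rank `j` with `i-1 ≤ j ≤ c`,
the value `max 0 (min D (d j) - b)` occurs with multiplicity `C(j-1, i-2)`. -/
theorem stmt_6 (i c : ℕ) (hi : 2 ≤ i) (hc : i - 1 ≤ c) (b D : ℝ)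
    (d : ℕ → ℝ) (hd : Antitone d) :
    (((Finset.Icc 1 c).powersetCard (i - 1)).attach.val.map
      (fun (S : {x // x ∈ (Finset.Icc 1 c).powersetCard (i - 1)}) =>
        have hS : S.1.Nonempty := Finset.card_pos.mp (by
          have h := (Finset.mem_powersetCard.mp S.2).2
          omega)
        max 0 (min D (S.1.inf' hS d) - b))) =
    ((Finset.Icc (i - 1) c).val.bind
      (fun j => Multiset.replicate ((j - 1).choose (i - 2))
        (max 0 (min D (d j) - b)))) := by
  set F : ℕ → ℝ := fun j => max 0 (min D (d j) - b) with hF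
  have hfun : (fun (S : {x // x ∈ (Finset.Icc 1 c).powersetCard (i - 1)}) =>
        have hS : S.1.Nonempty := Finset.card_pos.mp (by
          have h := (Finset.mem_powersetCard.mp S.2).2
          omega)
        max 0 (min D (S.1.inf' hS d) - b)) =
      (fun S : {x // x ∈ (Finset.Icc 1 c).powersetCard (i - 1)} =>
        F (S.1.sup id)) := by
    funext S
    have hS : S.1.Nonempty := Finset.card_pos.mp (by
      have h := (Finset.mem_powersetCard.mp S.2).2
      omega)
    simp only
    rw [inf'_antitone hd S.1 hS]
  rw [hfun]
  have hattach : ((Finset.Icc 1 c).powersetCard (i - 1)).attach.val.map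
      (fun S : {x // x ∈ (Finset.Icc 1 c).powersetCard (i - 1)} => F (S.1.sup id)) =
      ((Finset.Icc 1 c).powersetCard (i - 1)).val.map (fun S => F (S.sup id)) := by
    have : (fun S : {x // x ∈ (Finset.Icc 1 c).powersetCard (i - 1)} => F (S.1.sup id))
        = (fun S => F (S.sup id)) ∘ Subtype.val := rfl
    rw [this, ← Multiset.map_map]
    congr 1
    exact Multiset.attach_map_val ((Finset.Icc 1 c).powersetCard (i - 1)).val
  rw [hattach]
  obtain ⟨m, hm⟩ : ∃ m, i - 1 = m + 1 := ⟨i - 2, by omega⟩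
  have h2 : i - 2 = m := by omega
  rw [hm, h2, key_count F m c]
end

section
/- Fix an integer i ≥ 2, a natural number M, and bars b, d : Fin M → ℝ with b r < d r for all r. Define the sweep order on Fin M by s ≺ r iff b s < b r, or b s = b r and s < r, the alive set A_r := {s : s ≺ r and b r < d s}, and c_r := |A_r|. For each r, let the deaths of the bars in A_r, listed in non-increasing order, be d_r(1) ≥ d_r(2) ≥ ⋯ ≥ d_r(c_r), and set ℓ_r(j) := min(d r, d_r(j)) − b r (which is positive). Then the multiset of lengths min_{ℓ∈I} d ℓ − max_{ℓ∈I} b ℓ, as I ranges over all i-element subsets of Fin M with max_{ℓ∈I} b ℓ < min_{ℓ∈I} d ℓ (counted with multiplicity), equals the multiset union over all r ∈ Fin M of the multisets {ℓ_r(j) with multiplicity C(j−1, i−2) : i − 1 ≤ j ≤ c_r}. -/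
open scoped Classical

/-- The alive set `A_r`: bars preceding `r` in the sweep order (earlier birth,
or equal birth and smaller index) that are still alive at the birth of `r`. -/
noncomputable def aliveSet {M : ℕ} (b d : Fin M → ℝ) (r : Fin M) : Finset (Fin M) :=
  Finset.univ.filter (fun s => (b s < b r ∨ (b s = b r ∧ s < r)) ∧ b r < d s)

/-- The `j`-th largest death time among the bars alive just before the birth of
`r` (so `nthDeath b d r 1 ≥ nthDeath b d r 2 ≥ ⋯`). -/
noncomputable def nthDeath {M : ℕ} (b d : Fin M → ℝ) (r : Fin M) (j : ℕ) : ℝ :=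
  (((aliveSet b d r).val.map d).sort (· ≥ ·)).getD (j - 1) 0

namespace Stmt7Aux

lemma map_val_eq_sum {α β : Type*} (t : Finset α) (g : α → β) :
    t.val.map g = ∑ x ∈ t, ({g x} : Multiset β) := by
  rw [Finset.sum_eq_multiset_sum]
  have : (Multiset.map (fun x => ({g x} : Multiset β)) t.val)
      = Multiset.map (fun a => ({a} : Multiset β)) (t.val.map g) := by
    rw [Multiset.map_map]; rfl
  rw [this, Multiset.sum_map_singleton]

lemma multiset_map_attach {α β : Type*} (S : Finset α) (f : {x // x ∈ S} → β) (F : α → β)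
    (h : ∀ (x : {x // x ∈ S}), f x = F x.1) :
    S.attach.val.map f = S.val.map F := by
  rw [map_val_eq_sum, map_val_eq_sum]
  calc ∑ x ∈ S.attach, ({f x} : Multiset β)
      = ∑ x ∈ S.attach, ({F x.1} : Multiset β) := by
        exact Finset.sum_congr rfl (fun x _ => by rw [h])
    _ = ∑ x ∈ S, ({F x} : Multiset β) := Finset.sum_attach S (fun x => ({F x} : Multiset β))

lemma exists_list_of_map_eq {α β : Type*} (f : α → β) :
    ∀ (L : List β) (s : Multiset α), s.map f = ↑L → ∃ l : List α, ↑l = s ∧ l.map f = L := by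
  intro L
  induction L with
  | nil =>
    intro s hs
    refine ⟨[], ?_, by simp⟩
    have : s.map f = 0 := by simpa using hs
    simp [Multiset.map_eq_zero.mp this]
  | cons x L ih =>
    intro s hs
    have hx : x ∈ s.map f := by rw [hs]; simp
    obtain ⟨a, ha, hfa⟩ := Multiset.mem_map.mp hx
    have hs' : (s.erase a).map f = ↑L := by
      have h1 : s = a ::ₘ s.erase a := (Multiset.cons_erase ha).symm
      rw [h1, Multiset.map_cons, hfa] at hs
      have h2 : (x ::ₘ (s.erase a).map f) = x ::ₘ (↑L : Multiset β) := by
        rw [hs]; rfl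
      exact (Multiset.cons_inj_right x).mp h2
    obtain ⟨l, hl, hlf⟩ := ih _ hs'
    exact ⟨a :: l, by rw [← Multiset.cons_coe, hl, Multiset.cons_erase ha],
      by simp [hlf, hfa]⟩

lemma count_max {β : Type*} (k' : ℕ) (H : ℕ → β) :
    ∀ c : ℕ, Multiset.map (fun K => H (K.sup id)) ((Finset.range c).powersetCard (k' + 1)).val
      = ∑ m ∈ Finset.range c, Multiset.replicate (m.choose k') (H m) := by
  intro c
  induction c with
  | zero => simp
  | succ c ih =>
    have hc : c ∉ Finset.range c := by simp
    rw [Finset.range_add_one, Finset.powersetCard_succ_insert hc]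
    have hdisj : Disjoint ((Finset.range c).powersetCard (k' + 1))
        (Finset.image (insert c) ((Finset.range c).powersetCard k')) := by
      rw [Finset.disjoint_left]
      intro K hK1 hK2
      obtain ⟨K', hK', rfl⟩ := Finset.mem_image.mp hK2
      have hsub := (Finset.mem_powersetCard.mp hK1).1
      exact hc (hsub (Finset.mem_insert_self c K'))
    rw [← Finset.disjUnion_eq_union _ _ hdisj]
    have hval : (((Finset.range c).powersetCard (k' + 1)).disjUnion
        (Finset.image (insert c) ((Finset.range c).powersetCard k')) hdisj).val
        = ((Finset.range c).powersetCard (k' + 1)).val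
          + (Finset.image (insert c) ((Finset.range c).powersetCard k')).val := rfl
    rw [hval, Multiset.map_add]
    have hinj : Set.InjOn (insert c) (((Finset.range c).powersetCard k' : Finset (Finset ℕ)) : Set (Finset ℕ)) := by
      intro K1 h1 K2 h2 he
      have hc1 : c ∉ K1 := fun h => hc ((Finset.mem_powersetCard.mp h1).1 h)
      have hc2 : c ∉ K2 := fun h => hc ((Finset.mem_powersetCard.mp h2).1 h)
      rw [← Finset.erase_insert hc1, ← Finset.erase_insert hc2, he]
    rw [Finset.image_val_of_injOn hinj, Multiset.map_map]
    have hconst : Multiset.map ((fun K => H (K.sup id)) ∘ insert c)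
        ((Finset.range c).powersetCard k').val
        = Multiset.map (fun _ => H c) ((Finset.range c).powersetCard k').val := by
      apply Multiset.map_congr rfl
      intro K hK
      have hK' : K ∈ (Finset.range c).powersetCard k' := hK
      have hsub := (Finset.mem_powersetCard.mp hK').1
      have hsup : (insert c K).sup id = c := by
        rw [Finset.sup_insert]
        have : K.sup id ≤ c := Finset.sup_le fun m hm => by
          have := Finset.mem_range.mp (hsub hm); simp only [id_eq]; omega
        simp [id, sup_eq_left.mpr this]
      simp [Function.comp, hsup]
    rw [hconst, Multiset.map_const', Finset.sum_insert hc, ih, add_comm]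
    congr 1
    rw [← Finset.card_def, Finset.card_powersetCard, Finset.card_range]

end Stmt7Aux


namespace Stmt7Aux

variable {M : ℕ} (b d : Fin M → ℝ)

/-- The sweep-order embedding. -/
noncomputable def sw (s : Fin M) : Lex (ℝ × Fin M) := toLex (b s, s)

lemma sw_injective : Function.Injective (sw b) := by
  intro s t h
  have := congrArg (fun x => (ofLex x).2) h
  simpa [sw] using this

lemma sw_lt_iff {s r : Fin M} : sw b s < sw b r ↔ (b s < b r ∨ (b s = b r ∧ s < r)) := by
  simp [sw, Prod.Lex.lt_iff]

lemma mem_aliveSet_iff {r s : Fin M} :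
    s ∈ aliveSet b d r ↔ (sw b s < sw b r ∧ b r < d s) := by
  simp [aliveSet, sw_lt_iff]

lemma sw_le_of_mem_alive {r s : Fin M} (h : s ∈ aliveSet b d r) : b s ≤ b r := by
  rcases (sw_lt_iff b).mp ((mem_aliveSet_iff b d).mp h).1 with h | h
  · exact le_of_lt h
  · exact le_of_eq h.1

lemma not_mem_aliveSet_self (r : Fin M) : r ∉ aliveSet b d r := by
  intro h
  exact lt_irrefl _ ((mem_aliveSet_iff b d).mp h).1

section Main

variable (hbd : ∀ r, b r < d r) (k' : ℕ)

/-- Membership in an anchored block. -/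
lemma mem_block_iff {r : Fin M} {I : Finset (Fin M)} :
    I ∈ ((aliveSet b d r).powersetCard (k' + 1)).image (insert r) ↔
      ∃ J, J ⊆ aliveSet b d r ∧ J.card = k' + 1 ∧ insert r J = I := by
  simp only [Finset.mem_image, Finset.mem_powersetCard]
  constructor
  · rintro ⟨J, ⟨hJ1, hJ2⟩, rfl⟩; exact ⟨J, hJ1, hJ2, rfl⟩
  · rintro ⟨J, hJ1, hJ2, rfl⟩; exact ⟨J, ⟨hJ1, hJ2⟩, rfl⟩

lemma block_max {r : Fin M} {I : Finset (Fin M)}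
    (h : I ∈ ((aliveSet b d r).powersetCard (k' + 1)).image (insert r)) :
    r ∈ I ∧ ∀ s ∈ I, s ≠ r → sw b s < sw b r := by
  obtain ⟨J, hJ1, _, rfl⟩ := (mem_block_iff b d k').mp h
  refine ⟨Finset.mem_insert_self r J, ?_⟩
  intro s hs hsr
  rcases Finset.mem_insert.mp hs with rfl | hsJ
  · exact absurd rfl hsr
  · exact ((mem_aliveSet_iff b d).mp (hJ1 hsJ)).1

lemma pairwise_disj :
    Set.PairwiseDisjoint (↑(Finset.univ : Finset (Fin M)))
      (fun r => ((aliveSet b d r).powersetCard (k' + 1)).image (insert r)) := by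
  intro r _ r' _ hrr'
  rw [Function.onFun, Finset.disjoint_left]
  intro I h1 h2
  obtain ⟨hr1, hmax1⟩ := block_max b d k' h1
  obtain ⟨hr2, hmax2⟩ := block_max b d k' h2
  exact lt_asymm (hmax1 r' hr2 (fun h => hrr' h.symm)) (hmax2 r hr1 hrr')

include hbd in
lemma anchor_decomp :
    ((Finset.univ : Finset (Fin M)).powersetCard (k' + 2)).filter
        (fun I => ∀ hI : I.Nonempty, I.sup' hI b < I.inf' hI d) =
      Finset.univ.disjiUnion
        (fun r => ((aliveSet b d r).powersetCard (k' + 1)).image (insert r))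
        (pairwise_disj b d k') := by
  ext I
  rw [Finset.mem_disjiUnion]
  simp only [Finset.mem_filter, Finset.mem_powersetCard, Finset.mem_univ, true_and,
    Finset.subset_univ]
  constructor
  · rintro ⟨hcard, hcond⟩
    have hne : I.Nonempty := Finset.card_pos.mp (by omega)
    obtain ⟨r, hr, hrmax⟩ := Finset.exists_max_image I (sw b) hne
    refine ⟨r, (mem_block_iff b d k').mpr ⟨I.erase r, ?_, ?_, Finset.insert_erase hr⟩⟩
    · intro s hs
      have hsI := Finset.mem_of_mem_erase hs
      have hsr : s ≠ r := Finset.ne_of_mem_erase hs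
      refine (mem_aliveSet_iff b d).mpr ⟨lt_of_le_of_ne (hrmax s hsI)
        (fun h => hsr (sw_injective b h)), ?_⟩
      calc b r ≤ I.sup' hne b := Finset.le_sup' b hr
        _ < I.inf' hne d := hcond hne
        _ ≤ d s := Finset.inf'_le d hsI
    · rw [Finset.card_erase_of_mem hr, hcard]
      omega
  · rintro ⟨r, hI⟩
    obtain ⟨J, hJ1, hJ2, rfl⟩ := (mem_block_iff b d k').mp hI
    have hrJ : r ∉ J := fun h => not_mem_aliveSet_self b d r (hJ1 h)
    have hcard : (insert r J).card = k' + 2 := by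
      rw [Finset.card_insert_of_notMem hrJ, hJ2]
    refine ⟨hcard, ?_⟩
    intro hne
    rw [Finset.sup'_lt_iff]
    intro s hs
    rw [Finset.lt_inf'_iff]
    intro t ht
    have hbs : b s ≤ b r := by
      rcases Finset.mem_insert.mp hs with rfl | hsJ
      · exact le_refl _
      · exact sw_le_of_mem_alive b d (hJ1 hsJ)
    have hdt : b r < d t := by
      rcases Finset.mem_insert.mp ht with rfl | htJ
      · exact hbd t
      · exact ((mem_aliveSet_iff b d).mp (hJ1 htJ)).2
    exact lt_of_le_of_lt hbs hdt

lemma reindex {β : Type*} (c : ℕ) (H : ℕ → β) :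
    ∑ m ∈ Finset.range c, Multiset.replicate (m.choose k') (H m)
      = ∑ j ∈ Finset.Icc (k' + 1) c, Multiset.replicate ((j - 1).choose k') (H (j - 1)) := by
  rw [← Finset.sum_filter_of_ne (s := Finset.range c)
    (f := fun m => Multiset.replicate (m.choose k') (H m)) (p := fun m => k' ≤ m)
    (by
      intro x _ hx
      by_contra hlt
      push_neg at hlt
      refine hx ?_
      show Multiset.replicate (x.choose k') _ = 0
      rw [Nat.choose_eq_zero_of_lt hlt, Multiset.replicate_zero])]
  refine Finset.sum_nbij' (fun m => m + 1) (fun j => j - 1) ?_ ?_ ?_ ?_ ?_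
  · intro a ha
    simp only [Finset.mem_filter, Finset.mem_range] at ha
    simp only [Finset.mem_Icc]
    omega
  · intro a ha
    simp only [Finset.mem_Icc] at ha
    simp only [Finset.mem_filter, Finset.mem_range]
    omega
  · intro a _; omega
  · intro a ha
    simp only [Finset.mem_Icc] at ha
    omega
  · intro a _
    rfl

lemma per_anchor (r : Fin M) :
    ∑ J ∈ (aliveSet b d r).powersetCard (k' + 1),
        ({(if h : (insert r J).Nonempty then (insert r J).inf' h d - (insert r J).sup' h b
            else 0)} : Multiset ℝ)
      = ∑ j ∈ Finset.Icc (k' + 1) ((aliveSet b d r).card),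
          Multiset.replicate ((j - 1).choose k') (min (d r) (nthDeath b d r j) - b r) := by
  classical
  set A := aliveSet b d r with hA
  set c := A.card with hc
  set L : List ℝ := (A.val.map d).sort (· ≥ ·) with hLdef
  have hLm : (↑L : Multiset ℝ) = A.val.map d := Multiset.sort_eq _ _
  have hLlen : L.length = c := by
    rw [← Multiset.coe_card, hLm, Multiset.card_map]
    rfl
  have hLs : L.Pairwise (· ≥ ·) := Multiset.pairwise_sort _ _
  have hnth : ∀ j, nthDeath b d r j = L.getD (j - 1) 0 := fun j => rfl
  obtain ⟨l, hl, hld⟩ := exists_list_of_map_eq d L A.val (by rw [hLm])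
  have hlnd : l.Nodup := by rw [← Multiset.coe_nodup, hl]; exact A.nodup
  have hllen : l.length = c := by rw [← Multiset.coe_card, hl]; rfl
  set φ : ℕ → Fin M := fun m => l.getD m r with hφ
  have hφmem : ∀ m, m < c → φ m ∈ A := by
    intro m hm
    have hm' : m < l.length := by omega
    have : φ m ∈ l := by
      simp only [hφ]
      rw [List.getD_eq_get l r ⟨m, hm'⟩]
      exact List.get_mem l ⟨m, hm'⟩
    have h2 : φ m ∈ (↑l : Multiset (Fin M)) := this
    rw [hl] at h2
    exact h2
  have hφd : ∀ m, m < c → d (φ m) = L.getD m 0 := by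
    intro m hm
    have hm' : m < l.length := by omega
    have hm'' : m < L.length := by omega
    simp only [hφ]
    have h1 : d (l.getD m r) = (l.map d).getD m (d r) := (List.getD_map l r d).symm
    rw [h1, hld]
    rw [List.getD_eq_get L (d r) ⟨m, hm''⟩, List.getD_eq_get L 0 ⟨m, hm''⟩]
  have hφinj : ∀ m m', m < c → m' < c → φ m = φ m' → m = m' := by
    intro m m' hm hm' he
    have hm1 : m < l.length := by omega
    have hm2 : m' < l.length := by omega
    simp only [hφ] at he
    rw [List.getD_eq_get l r ⟨m, hm1⟩, List.getD_eq_get l r ⟨m', hm2⟩] at he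
    have h3 := List.nodup_iff_injective_get.mp hlnd he
    have := congrArg Fin.val h3
    simpa using this
  have hmono : ∀ m m', m ≤ m' → m' < c → L.getD m' 0 ≤ L.getD m 0 := by
    intro m m' hle hm'
    have h1 : m < L.length := by omega
    have h2 : m' < L.length := by omega
    rw [List.getD_eq_get L 0 ⟨m, h1⟩, List.getD_eq_get L 0 ⟨m', h2⟩]
    exact hLs.rel_get_of_le (by exact hle)
  -- the key Finset equality
  have key1 : A.powersetCard (k' + 1)
      = ((Finset.range c).powersetCard (k' + 1)).image (Finset.image φ) := by
    ext J
    simp only [Finset.mem_image, Finset.mem_powersetCard]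
    constructor
    · rintro ⟨hJA, hJc⟩
      have himg : ((Finset.range c).filter (fun m => φ m ∈ J)).image φ = J := by
        ext a
        constructor
        · intro ha
          obtain ⟨m, hm, rfl⟩ := Finset.mem_image.mp ha
          exact (Finset.mem_filter.mp hm).2
        · intro ha
          have haA : a ∈ A := hJA ha
          have hal : a ∈ (↑l : Multiset (Fin M)) := by rw [hl]; exact haA
          obtain ⟨n, hn⟩ := List.mem_iff_get.mp hal
          have hnc : (n : ℕ) < c := by have := n.isLt; omega
          have hφn : φ (n : ℕ) = a := by
            simp only [hφ]
            rw [List.getD_eq_get l r n]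
            simpa using hn
          refine Finset.mem_image.mpr ⟨(n : ℕ), Finset.mem_filter.mpr
            ⟨Finset.mem_range.mpr hnc, by rw [hφn]; exact ha⟩, hφn⟩
      have hinjK : Set.InjOn φ ↑((Finset.range c).filter (fun m => φ m ∈ J)) := by
        intro x hx y hy hxy
        simp only [Finset.coe_filter, Set.mem_setOf_eq, Finset.mem_range] at hx hy
        exact hφinj x y hx.1 hy.1 hxy
      refine ⟨(Finset.range c).filter (fun m => φ m ∈ J), ⟨Finset.filter_subset _ _, ?_⟩, himg⟩
      rw [← Finset.card_image_of_injOn hinjK, himg, hJc]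
    · rintro ⟨K, ⟨hKr, hKc⟩, rfl⟩
      constructor
      · intro a ha
        obtain ⟨m, hm, rfl⟩ := Finset.mem_image.mp ha
        exact hφmem m (Finset.mem_range.mp (hKr hm))
      · rw [Finset.card_image_of_injOn, hKc]
        intro x hx y hy hxy
        exact hφinj x y (Finset.mem_range.mp (hKr hx)) (Finset.mem_range.mp (hKr hy)) hxy
  set Hf : ℕ → ℝ := fun m => min (d r) (L.getD m 0) - b r with hHf
  rw [key1, Finset.sum_image (by
    intro K1 hK1 K2 hK2 he
    have hr1 : K1 ⊆ Finset.range c := (Finset.mem_powersetCard.mp hK1).1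
    have hr2 : K2 ⊆ Finset.range c := (Finset.mem_powersetCard.mp hK2).1
    have hsub : ∀ K1' K2' : Finset ℕ, K1' ⊆ Finset.range c → K2' ⊆ Finset.range c →
        K1'.image φ = K2'.image φ → K1' ⊆ K2' := by
      intro K1' K2' h1 h2 hi m hm
      have : φ m ∈ K2'.image φ := by rw [← hi]; exact Finset.mem_image_of_mem φ hm
      obtain ⟨m', hm', hmm⟩ := Finset.mem_image.mp this
      rwa [hφinj m' m (Finset.mem_range.mp (h2 hm')) (Finset.mem_range.mp (h1 hm)) hmm] at hm'
    exact Finset.Subset.antisymm (hsub K1 K2 hr1 hr2 he) (hsub K2 K1 hr2 hr1 he.symm))]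
  have hstep : ∀ K ∈ (Finset.range c).powersetCard (k' + 1),
      ({(if h : (insert r (K.image φ)).Nonempty then
          (insert r (K.image φ)).inf' h d - (insert r (K.image φ)).sup' h b else 0)}
        : Multiset ℝ)
      = {Hf (K.sup id)} := by
    intro K hK
    obtain ⟨hKr, hKc⟩ := Finset.mem_powersetCard.mp hK
    have hKne : K.Nonempty := Finset.card_pos.mp (by omega)
    have hJne : (K.image φ).Nonempty := hKne.image φ
    have hins : (insert r (K.image φ)).Nonempty := Finset.insert_nonempty _ _
    rw [dif_pos hins]
    set m₀ := K.max' hKne with hm₀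
    have hm₀K : m₀ ∈ K := Finset.max'_mem K hKne
    have hm₀c : m₀ < c := Finset.mem_range.mp (hKr hm₀K)
    have hsup0 : K.sup id = m₀ := by
      refine le_antisymm (Finset.sup_le fun m hm => Finset.le_max' K m hm) ?_
      exact Finset.le_sup (f := id) hm₀K
    have hinf : (insert r (K.image φ)).inf' hins d = d r ⊓ L.getD m₀ 0 := by
      rw [Finset.inf'_insert hJne d]
      congr 1
      refine le_antisymm ?_ ?_
      · have h1 : (K.image φ).inf' hJne d ≤ d (φ m₀) :=
          Finset.inf'_le d (Finset.mem_image_of_mem φ hm₀K)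
        rwa [hφd m₀ hm₀c] at h1
      · refine Finset.le_inf' hJne d ?_
        intro t ht
        obtain ⟨m, hm, rfl⟩ := Finset.mem_image.mp ht
        have hmc : m < c := Finset.mem_range.mp (hKr hm)
        rw [hφd m hmc]
        exact hmono m m₀ (Finset.le_max' K m hm) hm₀c
    have hsup : (insert r (K.image φ)).sup' hins b = b r := by
      rw [Finset.sup'_insert hJne b]
      refine sup_eq_left.mpr ?_
      refine Finset.sup'_le hJne b ?_
      intro t ht
      obtain ⟨m, hm, rfl⟩ := Finset.mem_image.mp ht
      exact sw_le_of_mem_alive b d (hφmem m (Finset.mem_range.mp (hKr hm)))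
    rw [hinf, hsup, hsup0, hHf]
  rw [Finset.sum_congr rfl hstep, ← map_val_eq_sum, count_max k' Hf c, reindex k' c Hf]
  refine Finset.sum_congr rfl ?_
  intro j _
  rw [hnth j, hHf]

end Main

end Stmt7Aux


/-- Anchored rank-grouping decomposition: the multiset of lengths
`min death − max birth` over all `i`-element subsets of bars with
`max birth < min death` equals the union over anchors `r` of the multisets in
which `ℓ_r(j) = min (d r) (d_r(j)) − b r` occurs with multiplicity
`C(j-1, i-2)` for `i-1 ≤ j ≤ c_r`. -/
theorem stmt_7 (i M : ℕ) (hi : 2 ≤ i) (b d : Fin M → ℝ) (hbd : ∀ r, b r < d r) :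
    ((((Finset.univ : Finset (Fin M)).powersetCard i).filter
        (fun I => ∀ hI : I.Nonempty, I.sup' hI b < I.inf' hI d)).attach.val.map
      (fun (I : {x // x ∈ ((Finset.univ : Finset (Fin M)).powersetCard i).filter
          (fun I => ∀ hI : I.Nonempty, I.sup' hI b < I.inf' hI d)}) =>
        have hI : I.1.Nonempty := Finset.card_pos.mp (by
          have h := (Finset.mem_powersetCard.mp (Finset.mem_filter.mp I.2).1).2
          omega)
        I.1.inf' hI d - I.1.sup' hI b)) =
    ∑ r : Fin M, ∑ j ∈ Finset.Icc (i - 1) ((aliveSet b d r).card),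
      Multiset.replicate ((j - 1).choose (i - 2))
        (min (d r) (nthDeath b d r j) - b r) := by
  classical
  obtain ⟨k', rfl⟩ : ∃ k', i = k' + 2 := ⟨i - 2, by omega⟩
  have hmap := Stmt7Aux.multiset_map_attach
    ((((Finset.univ : Finset (Fin M)).powersetCard (k' + 2)).filter
        (fun I => ∀ hI : I.Nonempty, I.sup' hI b < I.inf' hI d)))
    (fun (I : {x // x ∈ ((Finset.univ : Finset (Fin M)).powersetCard (k' + 2)).filter
          (fun I => ∀ hI : I.Nonempty, I.sup' hI b < I.inf' hI d)}) =>
        have hI : I.1.Nonempty := Finset.card_pos.mp (by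
          have h := (Finset.mem_powersetCard.mp (Finset.mem_filter.mp I.2).1).2
          omega)
        I.1.inf' hI d - I.1.sup' hI b)
    (fun I => if h : I.Nonempty then I.inf' h d - I.sup' h b else 0)
    (fun x => by
      have hne : x.1.Nonempty := Finset.card_pos.mp (by
        have h := (Finset.mem_powersetCard.mp (Finset.mem_filter.mp x.2).1).2
        omega)
      show (↑x : Finset (Fin M)).inf' hne d - (↑x : Finset (Fin M)).sup' hne b
          = dite ((↑x : Finset (Fin M)).Nonempty)
            (fun h => (↑x : Finset (Fin M)).inf' h d - (↑x : Finset (Fin M)).sup' h b)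
            (fun _ => 0)
      exact (dif_pos hne
        (t := fun h => (↑x : Finset (Fin M)).inf' h d - (↑x : Finset (Fin M)).sup' h b)
        (e := fun _ => 0)).symm)
  rw [hmap, Stmt7Aux.map_val_eq_sum, Stmt7Aux.anchor_decomp b d hbd k',
    Finset.sum_disjiUnion]
  refine Finset.sum_congr rfl ?_
  intro r _
  have hinj : ∀ x ∈ (aliveSet b d r).powersetCard (k' + 1),
      ∀ y ∈ (aliveSet b d r).powersetCard (k' + 1), insert r x = insert r y → x = y := by
    intro x hx y hy he
    have hrx : r ∉ x := fun h =>
      Stmt7Aux.not_mem_aliveSet_self b d r ((Finset.mem_powersetCard.mp hx).1 h)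
    have hry : r ∉ y := fun h =>
      Stmt7Aux.not_mem_aliveSet_self b d r ((Finset.mem_powersetCard.mp hy).1 h)
    rw [← Finset.erase_insert hrx, ← Finset.erase_insert hry, he]
  rw [Finset.sum_image hinj]
  exact Stmt7Aux.per_anchor b d k' r
end

section
/- Fix an integer i ≥ 1, a natural number M, and bars b, d : Fin M → ℝ with b r < d r for all r. Define the sweep order on Fin M by s ≺ r iff b s < b r, or b s = b r and s < r, the alive set A_r := {s : s ≺ r and b r < d s}, and c_r := |A_r|. Then the number of i-element subsets I of Fin M with max_{ℓ∈I} b ℓ < min_{ℓ∈I} d ℓ equals ∑_{r ∈ Fin M} C(c_r, i−1). -/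
open scoped Classical

/-- Embedding of bar indices into the lexicographic order realizing the sweep order. -/
def sweepOrd {M : ℕ} (b : Fin M → ℝ) (s : Fin M) : Lex (ℝ × Fin M) := toLex (b s, s)

lemma sweepOrd_injective {M : ℕ} (b : Fin M → ℝ) : Function.Injective (sweepOrd b) := by
  intro s t h
  have := congrArg (fun x => (ofLex x).2) h
  simpa [sweepOrd] using this

lemma sweepOrd_lt_iff {M : ℕ} (b : Fin M → ℝ) (s r : Fin M) :
    sweepOrd b s < sweepOrd b r ↔ (b s < b r ∨ (b s = b r ∧ s < r)) := by
  simp [sweepOrd, Prod.Lex.lt_iff]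

/-- The anchor of a set: its sweep-order maximum. -/
noncomputable def anchor {M : ℕ} [Nonempty (Fin M)] (b : Fin M → ℝ) (I : Finset (Fin M)) :
    Fin M :=
  if h : I.Nonempty then (I.exists_max_image (sweepOrd b) h).choose else Classical.arbitrary _

lemma anchor_spec {M : ℕ} [Nonempty (Fin M)] (b : Fin M → ℝ) {I : Finset (Fin M)}
    (h : I.Nonempty) :
    anchor b I ∈ I ∧ ∀ s ∈ I, sweepOrd b s ≤ sweepOrd b (anchor b I) := by
  rw [anchor, dif_pos h]
  exact (I.exists_max_image (sweepOrd b) h).choose_spec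

lemma mem_aliveSet_lt {M : ℕ} {b d : Fin M → ℝ} {r s : Fin M}
    (hs : s ∈ aliveSet b d r) : sweepOrd b s < sweepOrd b r := by
  rw [sweepOrd_lt_iff]
  exact ((Finset.mem_filter.mp hs).2).1

/-- The number of `i`-element subsets of bars with `max birth < min death`
equals the sum over anchors `r` of `C(c_r, i-1)` where `c_r = |A_r|`. -/
theorem stmt_8 (i M : ℕ) (hi : 1 ≤ i) (b d : Fin M → ℝ) (hbd : ∀ r, b r < d r) :
    ((((Finset.univ : Finset (Fin M)).powersetCard i).filter
        (fun I => ∀ hI : I.Nonempty, I.sup' hI b < I.inf' hI d)).card) =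
      ∑ r : Fin M, ((aliveSet b d r).card).choose (i - 1) := by
  classical
  rcases Nat.eq_zero_or_pos M with hM | hM
  · subst hM
    rw [Finset.powersetCard_eq_empty.mpr (by simp; omega), Finset.filter_empty]
    simp
  haveI : Nonempty (Fin M) := ⟨⟨0, hM⟩⟩
  set S := (((Finset.univ : Finset (Fin M)).powersetCard i).filter
      (fun I => ∀ hI : I.Nonempty, I.sup' hI b < I.inf' hI d)) with hS
  rw [Finset.card_eq_sum_card_fiberwise (f := anchor b) (t := Finset.univ)
      (fun I _ => Finset.mem_univ _)]
  refine Finset.sum_congr rfl fun r _ => ?_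
  rw [← Finset.card_powersetCard (i - 1) (aliveSet b d r)]
  refine Finset.card_bij (fun I _ => I.erase r) ?_ ?_ ?_
  · intro I hI
    obtain ⟨hIS, hanch⟩ := Finset.mem_filter.mp hI
    obtain ⟨hIp, hcond⟩ := Finset.mem_filter.mp hIS
    have hcard : I.card = i := (Finset.mem_powersetCard.mp hIp).2
    have hne : I.Nonempty := Finset.card_pos.mp (by omega)
    obtain ⟨hmem, hmax⟩ := anchor_spec b hne (I := I)
    rw [hanch] at hmem hmax
    rw [Finset.mem_powersetCard]
    constructor
    · intro s hs
      obtain ⟨hsr, hsI⟩ := Finset.mem_erase.mp hs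
      have hlt : sweepOrd b s < sweepOrd b r :=
        lt_of_le_of_ne (hmax s hsI) (fun h => hsr (sweepOrd_injective b h))
      rw [sweepOrd_lt_iff] at hlt
      refine Finset.mem_filter.mpr ⟨Finset.mem_univ _, hlt, ?_⟩
      calc b r ≤ I.sup' hne b := Finset.le_sup' b hmem
        _ < I.inf' hne d := hcond hne
        _ ≤ d s := Finset.inf'_le d hsI
    · rw [Finset.card_erase_of_mem hmem, hcard]
  · intro I hI I' hI' h
    have hmem : r ∈ I := by
      obtain ⟨hIS, hanch⟩ := Finset.mem_filter.mp hI
      obtain ⟨hIp, hcond⟩ := Finset.mem_filter.mp hIS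
      have hcard : I.card = i := (Finset.mem_powersetCard.mp hIp).2
      have hne : I.Nonempty := Finset.card_pos.mp (by omega)
      have := (anchor_spec b hne (I := I)).1
      rwa [hanch] at this
    have hmem' : r ∈ I' := by
      obtain ⟨hIS, hanch⟩ := Finset.mem_filter.mp hI'
      obtain ⟨hIp, hcond⟩ := Finset.mem_filter.mp hIS
      have hcard : I'.card = i := (Finset.mem_powersetCard.mp hIp).2
      have hne : I'.Nonempty := Finset.card_pos.mp (by omega)
      have := (anchor_spec b hne (I := I')).1
      rwa [hanch] at this
    rw [← Finset.insert_erase hmem, ← Finset.insert_erase hmem', h]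
  · intro J hJ
    obtain ⟨hJsub, hJcard⟩ := Finset.mem_powersetCard.mp hJ
    have hrJ : r ∉ J := fun h => lt_irrefl _ (mem_aliveSet_lt (hJsub h))
    refine ⟨insert r J, ?_, ?_⟩
    · have hne : (insert r J).Nonempty := Finset.insert_nonempty _ _
      have hbr : ∀ s ∈ insert r J, b s ≤ b r := by
        intro s hs
        rcases Finset.mem_insert.mp hs with h | h
        · exact le_of_eq (by rw [h])
        · rcases ((Finset.mem_filter.mp (hJsub h)).2).1 with h' | h'
          · exact le_of_lt h'
          · exact le_of_eq h'.1
      have hrd : ∀ s ∈ insert r J, b r < d s := by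
        intro s hs
        rcases Finset.mem_insert.mp hs with h | h
        · rw [h]; exact hbd r
        · exact ((Finset.mem_filter.mp (hJsub h)).2).2
      refine Finset.mem_filter.mpr ⟨Finset.mem_filter.mpr ⟨?_, ?_⟩, ?_⟩
      · rw [Finset.mem_powersetCard]
        refine ⟨Finset.subset_univ _, ?_⟩
        rw [Finset.card_insert_of_notMem hrJ, hJcard]
        omega
      · intro hI
        calc (insert r J).sup' hI b ≤ b r := Finset.sup'_le _ _ hbr
          _ < (insert r J).inf' hI d := (Finset.lt_inf'_iff _).mpr hrd
      · obtain ⟨hmem, hmax⟩ := anchor_spec b hne (I := insert r J)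
        rcases Finset.mem_insert.mp hmem with h | h
        · exact h
        · exact absurd (hmax r (Finset.mem_insert_self _ _))
            (not_le_of_gt (by simpa [h] using mem_aliveSet_lt (hJsub h)))
    · simpa using Finset.erase_insert hrJ
end

section
/- Let n be a natural number, c ≥ 0 a real number, and s, t : Fin n → ℝ two antitone (non-increasing) functions. Suppose there exists a permutation σ of Fin n such that |s k − t (σ k)| ≤ c for every k. Then |s k − t k| ≤ c for every k. -/
lemma aux_exists (n : ℕ) (σ : Equiv.Perm (Fin n)) (k : Fin n) :
    ∃ j, j ≤ k ∧ k ≤ σ j := by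
  by_contra hcon
  push_neg at hcon
  have hsub : Finset.image σ (Finset.Iic k) ⊆ Finset.Iio k := by
    intro x hx
    simp only [Finset.mem_image] at hx
    obtain ⟨j, hj, rfl⟩ := hx
    exact Finset.mem_Iio.mpr (hcon j (Finset.mem_Iic.mp hj))
  have h1 : (Finset.Iic k).card ≤ (Finset.Iio k).card := by
    rw [← Finset.card_image_of_injective (Finset.Iic k) σ.injective]
    exact Finset.card_le_card hsub
  rw [Fin.card_Iic, Fin.card_Iio] at h1
  omega

/-- Sorted-rearrangement Lipschitz lemma: if two non-increasing sequences admit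
a permutation matching elements within distance `c`, then they agree within `c`
coordinatewise. -/
theorem stmt_9 (n : ℕ) (c : ℝ) (hc : 0 ≤ c) (s t : Fin n → ℝ)
    (hs : Antitone s) (ht : Antitone t) (σ : Equiv.Perm (Fin n))
    (h : ∀ k, |s k - t (σ k)| ≤ c) :
    ∀ k, |s k - t k| ≤ c := by
  intro k
  rw [abs_le]
  constructor
  · -- -c ≤ s k - t k, i.e. t k ≤ s k + c : need j ≥ k with σ j ≤ k
    obtain ⟨j, hj1, hj2⟩ := aux_exists n σ⁻¹ k
    set i := σ⁻¹ j with hi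
    have hσi : σ i = j := by simp [hi]
    have h1 : t k ≤ t (σ i) := ht (hσi ▸ hj1)
    have h2 : s i ≤ s k := hs hj2
    have h3 := (abs_le.mp (h i)).1
    linarith
  · -- s k - t k ≤ c : need j ≤ k with σ j ≥ k
    obtain ⟨j, hj1, hj2⟩ := aux_exists n σ k
    have h1 : s k ≤ s j := hs hj1
    have h2 : t (σ j) ≤ t k := ht hj2
    have h3 := (abs_le.mp (h j)).2
    linarith
end

section
/- Let n be a natural number, ε ≥ 0 a real number, and X, Y : Fin n → ℝ × ℝ two families of bars. Suppose there is a permutation σ of Fin n such that for every k, |(X k).1 − (Y (σ k)).1| ≤ ε and |(X k).2 − (Y (σ k)).2| ≤ ε. Define lengths LX k := max(0, (X k).2 − (X k).1) and LY k := max(0, (Y k).2 − (Y k).1). If s, t : Fin n → ℝ are antitone functions that are rearrangements of LX and LY respectively (i.e., there exist permutations τ and τ' of Fin n with s = LX ∘ τ and t = LY ∘ τ'), then |s k − t k| ≤ 2ε for every k. -/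
lemma sorted_one_side {n : ℕ} (u v s t : Fin n → ℝ) (hs : Antitone s) (ht : Antitone t)
    (σ τ τ' : Equiv.Perm (Fin n)) (hsτ : s = u ∘ τ) (htτ : t = v ∘ τ')
    (c : ℝ) (h : ∀ j, u j ≤ v (σ j) + c) : ∀ k, s k ≤ t k + c := by
  intro k
  by_contra hlt
  push_neg at hlt
  have key : ∀ i ∈ Finset.Iic k, (τ'.symm (σ (τ i))) ∈ Finset.Iio k := by
    intro i hi
    simp only [Finset.mem_Iic] at hi
    have h1 : t k < t (τ'.symm (σ (τ i))) := by
      have h2 : t (τ'.symm (σ (τ i))) = v (σ (τ i)) := by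
        rw [htτ]; simp
      have h3 : s i = u (τ i) := by rw [hsτ]; rfl
      have h4 : s k ≤ s i := hs hi
      have := h (τ i)
      rw [h2]
      linarith
    simp only [Finset.mem_Iio]
    by_contra hk
    push_neg at hk
    exact absurd (ht hk) (not_le.mpr h1)
  have hinj : Set.InjOn (fun i => τ'.symm (σ (τ i))) (Finset.Iic k) := by
    intro a _ b _ hab
    exact τ.injective (σ.injective (τ'.symm.injective hab))
  have hcard := Finset.card_le_card_of_injOn _ key hinj
  simp only [Fin.card_Iic, Fin.card_Iio] at hcard
  omega

/-- Top-K stability in matching form: if a permutation matches two families of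
bars with endpoints moving by at most `ε`, then the sorted non-increasing
length vectors differ by at most `2ε` in every coordinate. -/
theorem stmt_10 (n : ℕ) (ε : ℝ) (hε : 0 ≤ ε) (X Y : Fin n → ℝ × ℝ)
    (σ : Equiv.Perm (Fin n))
    (hσ : ∀ k, |(X k).1 - (Y (σ k)).1| ≤ ε ∧ |(X k).2 - (Y (σ k)).2| ≤ ε)
    (s t : Fin n → ℝ) (hs : Antitone s) (ht : Antitone t)
    (τ τ' : Equiv.Perm (Fin n))
    (hsτ : s = (fun k => max 0 ((X k).2 - (X k).1)) ∘ τ)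
    (htτ : t = (fun k => max 0 ((Y k).2 - (Y k).1)) ∘ τ') :
    ∀ k, |s k - t k| ≤ 2 * ε := by
  set u : Fin n → ℝ := fun k => max 0 ((X k).2 - (X k).1) with hu
  set v : Fin n → ℝ := fun k => max 0 ((Y k).2 - (Y k).1) with hv
  have hclose : ∀ j, |u j - v (σ j)| ≤ 2 * ε := by
    intro j
    have h1 := (hσ j).1
    have h2 := (hσ j).2
    have h3 : |((X j).2 - (X j).1) - ((Y (σ j)).2 - (Y (σ j)).1)| ≤ 2 * ε := by
      rw [abs_le] at h1 h2 ⊢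
      constructor <;> linarith [h1.1, h1.2, h2.1, h2.2]
    calc |u j - v (σ j)| ≤ |((X j).2 - (X j).1) - ((Y (σ j)).2 - (Y (σ j)).1)| := by
          simpa [hu, hv, max_comm] using
            abs_max_sub_max_le_abs ((X j).2 - (X j).1) ((Y (σ j)).2 - (Y (σ j)).1) 0
      _ ≤ 2 * ε := h3
  intro k
  have hA : s k ≤ t k + 2 * ε := by
    refine sorted_one_side u v s t hs ht σ τ τ' hsτ htτ (2 * ε) (fun j => ?_) k
    have := hclose j
    rw [abs_le] at this
    linarith [this.1, this.2]
  have hB : t k ≤ s k + 2 * ε := by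
    refine sorted_one_side v u t s ht hs σ.symm τ' τ htτ hsτ (2 * ε) (fun j => ?_) k
    have := hclose (σ.symm j)
    simp only [Equiv.apply_symm_apply] at this
    rw [abs_le] at this
    linarith [this.1, this.2]
  rw [abs_le]
  constructor <;> linarith
end
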